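/- Let α ∈ (0,1) and let x, y ≥ 0 be real. Then: (i) ∫_0^x ∫_0^y α^(max(s,t)) dt ds = min(x,y)·(α^x + α^y)/ln α + 2·(1 − α^(min(x,y)))/(ln α)²; (ii) ∫_0^x ∫_{ℝ≥0} α^(max(s,t)) dt ds = (x·α^x·ln α + 2·(1 − α^x))/(ln α)². -/

import Mathlib

open MeasureTheory Set

section TCaux
variable {α : ℝ}


section TCaux

variable {α : ℝ}

lemma tc_cont (h0 : 0 < α) : Continuous (fun t : ℝ => α ^ t) :=
  continuous_iff_continuousAt.mpr fun t => (Real.hasStrictDerivAt_const_rpow h0 t).hasDerivAt.continuousAt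

lemma tc_hd (h0 : 0 < α) (t : ℝ) :
    HasDerivAt (fun u : ℝ => α ^ u) (α ^ t * Real.log α) t :=
  (Real.hasStrictDerivAt_const_rpow h0 t).hasDerivAt

lemma tc_int1 (h0 : 0 < α) (h1 : α < 1) (a b : ℝ) :
    ∫ t in a..b, α ^ t = (α ^ b - α ^ a) / Real.log α := by
  have hL : Real.log α ≠ 0 := ne_of_lt (Real.log_neg h0 h1)
  have := intervalIntegral.integral_eq_sub_of_hasDerivAt
    (f := fun u : ℝ => α ^ u / Real.log α) (f' := fun u : ℝ => α ^ u) (a := a) (b := b)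
    (fun t _ => by
      have := (tc_hd h0 t).div_const (Real.log α)
      convert this using 1
      exacts [rfl, by rw [mul_div_assoc, div_self hL, mul_one]])
    (((tc_cont h0).intervalIntegrable a b))
  rw [this]; ring

lemma tc_int2 (h0 : 0 < α) (h1 : α < 1) (a b : ℝ) :
    ∫ s in a..b, s * α ^ s =
      (b * α ^ b - a * α ^ a) / Real.log α - (α ^ b - α ^ a) / (Real.log α) ^ 2 := by
  have hL : Real.log α ≠ 0 := ne_of_lt (Real.log_neg h0 h1)
  have := intervalIntegral.integral_eq_sub_of_hasDerivAt
    (f := fun u : ℝ => u * α ^ u / Real.log α - α ^ u / (Real.log α) ^ 2)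
    (f' := fun u : ℝ => u * α ^ u) (a := a) (b := b)
    (fun t _ => by
      have := (((hasDerivAt_id t).mul (tc_hd h0 t)).div_const (Real.log α)).sub
        ((tc_hd h0 t).div_const ((Real.log α) ^ 2))
      convert this using 1
      · funext u; simp [Pi.mul_apply, Pi.sub_apply]
      · simp only [id]; field_simp; ring)
    ((continuous_id.mul (tc_cont h0)).intervalIntegrable a b)
  rw [this]; ring

lemma tc_inner1 (h0 : 0 < α) (h1 : α < 1) {s y : ℝ} (hs : 0 ≤ s) (hsy : s ≤ y) :
    ∫ t in (0:ℝ)..y, α ^ max s t = s * α ^ s + (α ^ y - α ^ s) / Real.log α := by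
  have hc : Continuous (fun t : ℝ => α ^ max s t) :=
    (tc_cont h0).comp (continuous_const.max continuous_id)
  rw [← intervalIntegral.integral_add_adjacent_intervals (a := (0:ℝ)) (b := s) (c := y)
      (hc.intervalIntegrable 0 s) (hc.intervalIntegrable s y)]
  have e1 : ∫ t in (0:ℝ)..s, α ^ max s t = s * α ^ s := by
    rw [intervalIntegral.integral_congr (g := fun _ => α ^ s)
      (fun t ht => by
        rw [Set.uIcc_of_le hs] at ht
        simp [max_eq_left ht.2]),
      intervalIntegral.integral_const]
    simp
  have e2 : ∫ t in s..y, α ^ max s t = (α ^ y - α ^ s) / Real.log α := by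
    rw [intervalIntegral.integral_congr (g := fun t => α ^ t)
      (fun t ht => by
        rw [Set.uIcc_of_le hsy] at ht
        simp [max_eq_right ht.1]),
      tc_int1 h0 h1]
  rw [e1, e2]

lemma tc_inner1' (h0 : 0 < α) {s y : ℝ} (hy : 0 ≤ y) (hys : y ≤ s) :
    ∫ t in (0:ℝ)..y, α ^ max s t = y * α ^ s := by
  rw [intervalIntegral.integral_congr (g := fun _ => α ^ s)
    (fun t ht => by
      rw [Set.uIcc_of_le hy] at ht
      simp [max_eq_left (ht.2.trans hys)]),
    intervalIntegral.integral_const]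
  simp

lemma tc_Ioi (h0 : 0 < α) (h1 : α < 1) (s : ℝ) :
    ∫ t in Set.Ioi s, α ^ t = -(α ^ s / Real.log α) := by
  have hderiv : ∀ u ∈ Set.Ici s, HasDerivAt (fun u : ℝ => α ^ u / Real.log α) (α ^ u) u := by
    intro u _
    have := (tc_hd h0 u).div_const (Real.log α)
    convert this using 1
    exacts [rfl, rfl, by rw [mul_div_assoc, div_self (ne_of_lt (Real.log_neg h0 h1)), mul_one]]
  have hpos : ∀ u ∈ Set.Ioi s, 0 ≤ α ^ u := fun u _ => (Real.rpow_pos_of_pos h0 u).le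
  have htend : Filter.Tendsto (fun u : ℝ => α ^ u / Real.log α) Filter.atTop (nhds 0) := by
    have := (tendsto_rpow_atTop_of_base_lt_one α (by linarith) h1).div_const (Real.log α)
    simpa using this
  have := integral_Ioi_of_hasDerivAt_of_nonneg' hderiv hpos htend
  rw [this]; ring

lemma tc_IoiInt (h0 : 0 < α) (h1 : α < 1) (s : ℝ) :
    IntegrableOn (fun t : ℝ => α ^ t) (Set.Ioi s) := by
  have hderiv : ∀ u ∈ Set.Ici s, HasDerivAt (fun u : ℝ => α ^ u / Real.log α) (α ^ u) u := by
    intro u _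
    have := (tc_hd h0 u).div_const (Real.log α)
    convert this using 1
    exacts [rfl, rfl, by rw [mul_div_assoc, div_self (ne_of_lt (Real.log_neg h0 h1)), mul_one]]
  have hpos : ∀ u ∈ Set.Ioi s, 0 ≤ α ^ u := fun u _ => (Real.rpow_pos_of_pos h0 u).le
  have htend : Filter.Tendsto (fun u : ℝ => α ^ u / Real.log α) Filter.atTop (nhds 0) := by
    have := (tendsto_rpow_atTop_of_base_lt_one α (by linarith) h1).div_const (Real.log α)
    simpa using this
  exact integrableOn_Ioi_deriv_of_nonneg' hderiv hpos htend

lemma tc_inner2 (h0 : 0 < α) (h1 : α < 1) {s : ℝ} (hs : 0 ≤ s) :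
    ∫ t in Set.Ici (0:ℝ), α ^ max s t = s * α ^ s - α ^ s / Real.log α := by
  have hc : Continuous (fun t : ℝ => α ^ max s t) :=
    (tc_cont h0).comp (continuous_const.max continuous_id)
  have hsplit : Set.Ico (0:ℝ) s ∪ Set.Ici s = Set.Ici 0 := Set.Ico_union_Ici_eq_Ici hs
  have hdisj : Disjoint (Set.Ico (0:ℝ) s) (Set.Ici s) :=
    Set.disjoint_left.2 fun t h1 h2 => (not_le.mpr h1.2) h2
  have hint1 : IntegrableOn (fun t : ℝ => α ^ max s t) (Set.Ico 0 s) :=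
    hc.integrableOn_Icc.mono_set Set.Ico_subset_Icc_self
  have hint2 : IntegrableOn (fun t : ℝ => α ^ max s t) (Set.Ici s) := by
    rw [integrableOn_Ici_iff_integrableOn_Ioi]
    apply (tc_IoiInt h0 h1 s).congr_fun ?_ measurableSet_Ioi
    intro t ht
    simp [max_eq_right (le_of_lt (Set.mem_Ioi.mp ht))]
  rw [← hsplit, setIntegral_union hdisj measurableSet_Ici hint1 hint2]
  have e1 : ∫ t in Set.Ico (0:ℝ) s, α ^ max s t = s * α ^ s := by
    rw [setIntegral_congr_fun measurableSet_Ico (g := fun _ => α ^ s)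
      (fun t ht => by simp [max_eq_left ht.2.le])]
    simp [Real.volume_Ico, ENNReal.toReal_ofReal hs, hs]
  have e2 : ∫ t in Set.Ici s, α ^ max s t = -(α ^ s / Real.log α) := by
    rw [setIntegral_congr_fun measurableSet_Ici (g := fun t => α ^ t)
      (fun t ht => by simp [max_eq_right (Set.mem_Ici.mp ht)]), integral_Ici_eq_integral_Ioi, tc_Ioi h0 h1]
  rw [e1, e2]; ring

/-- Main computation for the first part under `x ≤ y`. -/
lemma tc_main_le (h0 : 0 < α) (h1 : α < 1) {x y : ℝ} (hx : 0 ≤ x) (hxy : x ≤ y) :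
    ∫ s in (0:ℝ)..x, ∫ t in (0:ℝ)..y, α ^ max s t =
      x * (α ^ x + α ^ y) / Real.log α + 2 * (1 - α ^ x) / (Real.log α) ^ 2 := by
  have hL : Real.log α ≠ 0 := ne_of_lt (Real.log_neg h0 h1)
  rw [intervalIntegral.integral_congr
      (g := fun s => s * α ^ s + (α ^ y - α ^ s) / Real.log α)
      (fun s hs => by
        rw [Set.uIcc_of_le hx] at hs
        exact tc_inner1 h0 h1 hs.1 (hs.2.trans hxy)),
    intervalIntegral.integral_add (f := fun s => s * α ^ s) (g := fun s => (α ^ y - α ^ s) / Real.log α)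
      ((continuous_id'.mul (tc_cont h0)).intervalIntegrable 0 x)
      (((continuous_const.sub (tc_cont h0)).div_const _).intervalIntegrable 0 x),
    tc_int2 h0 h1]
  have : ∫ s in (0:ℝ)..x, (α ^ y - α ^ s) / Real.log α
      = ((x - 0) * α ^ y - (α ^ x - α ^ (0:ℝ)) / Real.log α) / Real.log α := by
    rw [intervalIntegral.integral_div, intervalIntegral.integral_sub
        (intervalIntegrable_const) ((tc_cont h0).intervalIntegrable 0 x),
      intervalIntegral.integral_const, tc_int1 h0 h1]
    simp
  rw [this]
  simp only [Real.rpow_zero, mul_zero, zero_mul, sub_zero]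
  field_simp
  ring

end TCaux


/-- Double integrals of the TC kernel:
(i) `∫_0^x ∫_0^y α^(max(s,t)) dt ds
      = min(x,y)·(α^x + α^y)/ln α + 2(1 − α^(min(x,y)))/(ln α)²`;
(ii) `∫_0^x ∫_{ℝ≥0} α^(max(s,t)) dt ds = (x·α^x·ln α + 2(1 − α^x))/(ln α)²`. -/
theorem nu_TC
    (α : ℝ) (hα : α ∈ Set.Ioo (0 : ℝ) 1)
    (x y : ℝ) (hx : 0 ≤ x) (hy : 0 ≤ y) :
    (∫ s in (0:ℝ)..x, ∫ t in (0:ℝ)..y, α ^ max s t =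
      min x y * (α ^ x + α ^ y) / Real.log α +
        2 * (1 - α ^ min x y) / (Real.log α) ^ 2) ∧
    (∫ s in (0:ℝ)..x, ∫ t in Set.Ici (0 : ℝ), α ^ max s t =
      (x * α ^ x * Real.log α + 2 * (1 - α ^ x)) / (Real.log α) ^ 2) := by
  obtain ⟨h0, h1⟩ := hα
  have hL : Real.log α ≠ 0 := ne_of_lt (Real.log_neg h0 h1)
  constructor
  · rcases le_total x y with hxy | hyx
    · rw [min_eq_left hxy, tc_main_le h0 h1 hx hxy]
    · rw [min_eq_right hyx]
      -- split the outer integral at y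
      have hcy : ContinuousOn (fun s : ℝ => ∫ t in (0:ℝ)..y, α ^ max s t) (Set.uIcc 0 y) := by
        apply ContinuousOn.congr
          (f := fun s => s * α ^ s + (α ^ y - α ^ s) / Real.log α)
        · exact ((continuous_id.mul (tc_cont h0)).add
            ((continuous_const.sub (tc_cont h0)).div_const _)).continuousOn
        · intro s hs
          rw [Set.uIcc_of_le hy] at hs
          exact tc_inner1 h0 h1 hs.1 hs.2
      have hcx : ContinuousOn (fun s : ℝ => ∫ t in (0:ℝ)..y, α ^ max s t) (Set.uIcc y x) := by
        apply ContinuousOn.congr (f := fun s => y * α ^ s)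
        · exact (continuous_const.mul (tc_cont h0)).continuousOn
        · intro s hs
          rw [Set.uIcc_of_le hyx] at hs
          exact tc_inner1' h0 hy hs.1
      rw [← intervalIntegral.integral_add_adjacent_intervals (a := (0:ℝ)) (b := y) (c := x)
        (hcy.intervalIntegrable) (hcx.intervalIntegrable)]
      rw [tc_main_le h0 h1 hy le_rfl]
      have e2 : ∫ s in y..x, ∫ t in (0:ℝ)..y, α ^ max s t = y * (α ^ x - α ^ y) / Real.log α := by
        rw [intervalIntegral.integral_congr (g := fun s => y * α ^ s)
          (fun s hs => by
            rw [Set.uIcc_of_le hyx] at hs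
            exact tc_inner1' h0 hy hs.1),
          intervalIntegral.integral_const_mul, tc_int1 h0 h1]
        ring
      rw [e2]
      field_simp
      ring
  · rw [intervalIntegral.integral_congr
        (g := fun s => s * α ^ s - α ^ s / Real.log α)
        (fun s hs => by
          rw [Set.uIcc_of_le hx] at hs
          exact tc_inner2 h0 h1 hs.1),
      intervalIntegral.integral_sub (f := fun s => s * α ^ s) (g := fun s => α ^ s / Real.log α)
        ((continuous_id'.mul (tc_cont h0)).intervalIntegrable 0 x)
        (((tc_cont h0).div_const _).intervalIntegrable 0 x),
      tc_int2 h0 h1]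
    have : ∫ s in (0:ℝ)..x, α ^ s / Real.log α = ((α ^ x - α ^ (0:ℝ)) / Real.log α) / Real.log α := by
      rw [intervalIntegral.integral_div, tc_int1 h0 h1]
    rw [this]
    simp only [Real.rpow_zero, mul_zero, zero_mul, sub_zero]
    field_simp
    ring
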